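/- Let p be a prime, n ≥ 1, d ∈ {0,…,p−1}, and let m be an integer with 0 ≤ m ≤ p·n + d such that (m mod p) ≤ d. Then ν_p(C(p·n + d, m)) = ν_p(C(n, ⌊m/p⌋)). -/

import Mathlib

private lemma mod_mul_split (m a b : ℕ) : m % (a * b) = a * (m / a % b) + m % a := by
  conv_lhs => rw [← Nat.div_add_mod (m % (a * b)) a]
  rw [Nat.mod_mul_right_div_self, Nat.mod_mod_of_dvd _ ⟨b, rfl⟩]

theorem valuation_no_carry (p : ℕ) (hp : p.Prime) (n d m : ℕ) (hn : 1 ≤ n) (hd : d < p)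
    (hm : m ≤ p * n + d) (hmd : m % p ≤ d) :
    padicValNat p ((p * n + d).choose m) = padicValNat p (n.choose (m / p)) := by
  haveI : Fact p.Prime := ⟨hp⟩
  have hp1 : 1 < p := hp.one_lt
  have hdm : p * (m / p) + m % p = m := Nat.div_add_mod m p
  have hqn : m / p ≤ n := by
    have : m / p < n + 1 := by
      rw [Nat.div_lt_iff_lt_mul hp.pos]
      have : (n + 1) * p = p * n + p := by ring
      omega
    omega
  have hsplit : p * (n - m / p) + p * (m / p) = p * n := by
    rw [← Nat.mul_add, Nat.sub_add_cancel hqn]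
  have hmsub : p * n + d - m = p * (n - m / p) + (d - m % p) := by omega
  have hlog1 : Nat.log p (p * n + d) < Nat.log p (p * n + d) + 2 := by omega
  have hlog2 : Nat.log p n < Nat.log p (p * n + d) + 2 - 1 := by
    have : Nat.log p n ≤ Nat.log p (p * n + d) := Nat.log_mono_right (by nlinarith)
    omega
  rw [padicValNat_choose hm hlog1, padicValNat_choose hqn hlog2]
  have hcond : ∀ j, 1 ≤ j →
      (p ^ (j + 1) ≤ m % p ^ (j + 1) + (p * n + d - m) % p ^ (j + 1) ↔
       p ^ j ≤ m / p % p ^ j + (n - m / p) % p ^ j) := by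
    intro j hj
    have e1 : m % p ^ (j + 1) = p * (m / p % p ^ j) + m % p := by
      rw [pow_succ, mul_comm (p ^ j) p, mod_mul_split]
    have e2 : (p * n + d - m) % p ^ (j + 1) = p * ((n - m / p) % p ^ j) + (d - m % p) := by
      rw [pow_succ, mul_comm (p ^ j) p, mod_mul_split, hmsub]
      have hdr : d - m % p < p := by omega
      rw [Nat.mul_add_div (by omega), Nat.div_eq_of_lt hdr, Nat.mul_add_mod,
        Nat.mod_eq_of_lt hdr, add_zero]
    have hdr2 : m % p + (d - m % p) = d := by omega
    rw [e1, e2, pow_succ, mul_comm (p ^ j) p]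
    constructor
    · intro h
      by_contra hc
      push_neg at hc
      have hx : p * (m / p % p ^ j) + p * ((n - m / p) % p ^ j) + p ≤ p * p ^ j := by
        calc p * (m / p % p ^ j) + p * ((n - m / p) % p ^ j) + p
            = p * (m / p % p ^ j + (n - m / p) % p ^ j + 1) := by ring
          _ ≤ p * p ^ j := Nat.mul_le_mul_left p (by omega)
      linarith
    · intro h
      have hx : p * p ^ j ≤ p * (m / p % p ^ j) + p * ((n - m / p) % p ^ j) :=
        (Nat.mul_le_mul_left p h).trans_eq (Nat.mul_add _ _ _)
      linarith
  have hno1 : ¬ (p ^ 1 ≤ m % p ^ 1 + (p * n + d - m) % p ^ 1) := by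
    rw [pow_one, hmsub, Nat.mul_add_mod, Nat.mod_eq_of_lt (by omega : d - m % p < p)]
    omega
  rw [show (Finset.Ico 1 (Nat.log p (p * n + d) + 2)) =
      insert 1 (Finset.Ico 2 (Nat.log p (p * n + d) + 2)) from
      (Finset.insert_Ico_succ_left_eq_Ico (by omega)).symm,
    Finset.filter_insert, if_neg (by simpa using hno1)]
  apply Finset.card_nbij (fun i => i - 1)
  · intro i hi
    simp only [Finset.mem_coe, Finset.mem_filter, Finset.mem_Ico] at hi ⊢
    obtain ⟨⟨h2, hib⟩, hc⟩ := hi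
    refine ⟨⟨by omega, by omega⟩, ?_⟩
    rw [← hcond (i - 1) (by omega)]
    rwa [show i - 1 + 1 = i by omega]
  · intro i hi j hj hij
    simp only [Finset.coe_filter, Set.mem_setOf_eq, Finset.mem_Ico] at hi hj
    have h' : i - 1 = j - 1 := hij
    omega
  · intro j hj
    simp only [Finset.coe_filter, Set.mem_setOf_eq, Finset.mem_Ico, Set.mem_image] at hj ⊢
    obtain ⟨⟨h1, hjb⟩, hc⟩ := hj
    exact ⟨j + 1, ⟨⟨by omega, by omega⟩, (hcond j h1).mpr hc⟩, by omega⟩
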